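/- Let k : (0,∞) → (0,∞) be measurable with 1/(t k(t)) locally integrable on (0,∞), and let Y : (0,∞) × ℝⁿ → [0,1] satisfy: for each ξ, t ↦ Y(t,ξ) is differentiable and nonincreasing with Y(0⁺,ξ) = 1, and −t k(t) ∂_t Y(t,ξ) ≤ |ξ|² Y(t,ξ) for all t > 0. Suppose h̃ : [0,∞) × ℝⁿ → ℂ satisfies |h̃(t,ξ)| ≤ q(ξ) for all t, ξ. Define ũ(t,ξ) = −(1/|ξ|²) ∫₀ᵗ h̃(s,ξ) ∂_s Y(t−s,ξ) ds for ξ ≠ 0. Then |ũ(t,ξ)| ≤ q(ξ) ∫₀ᵗ 1/(s k(s)) ds for all t > 0 and ξ ≠ 0. -/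

import Mathlib

open MeasureTheory Set Filter

lemma deriv_nonpos_of_antitoneOn_Ioi {f : ℝ → ℝ} {f' τ : ℝ} (hτ : 0 < τ)
    (hd : HasDerivAt f f' τ) (ha : AntitoneOn f (Ioi 0)) : f' ≤ 0 := by
  have h := hasDerivAt_iff_tendsto_slope.mp hd
  have h2 : Tendsto (slope f τ) (nhdsWithin τ (Ioi τ)) (nhds f') :=
    h.mono_left (nhdsWithin_mono τ (fun y hy => ne_of_gt hy))
  refine le_of_tendsto h2 ?_
  filter_upwards [self_mem_nhdsWithin] with y hy
  have hle : f y ≤ f τ := ha (mem_Ioi.mpr hτ) (mem_Ioi.mpr (hτ.trans hy)) (le_of_lt hy)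
  have hyτ : 0 < y - τ := sub_pos.mpr hy
  rw [slope_def_field, div_eq_inv_mul]
  exact mul_nonpos_of_nonneg_of_nonpos (inv_nonneg.mpr hyτ.le) (sub_nonpos.mpr hle)

theorem stmt_11 (n : ℕ) (k : ℝ → ℝ)
    (hkpos : ∀ t > 0, 0 < k t)
    (hkint : ∀ T > 0, IntegrableOn (fun s => 1 / (s * k s)) (Ioc 0 T))
    (Y Y' : ℝ → EuclideanSpace ℝ (Fin n) → ℝ)
    (hYbd : ∀ ξ, ∀ t > 0, 0 ≤ Y t ξ ∧ Y t ξ ≤ 1)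
    (hYder : ∀ ξ, ∀ t > 0, HasDerivAt (fun t => Y t ξ) (Y' t ξ) t)
    (hYanti : ∀ ξ, AntitoneOn (fun t => Y t ξ) (Ioi 0))
    (hY0 : ∀ ξ, Tendsto (fun t => Y t ξ) (nhdsWithin 0 (Ioi 0)) (nhds 1))
    (hYineq : ∀ ξ, ∀ t > 0, -(t * k t) * Y' t ξ ≤ ‖ξ‖ ^ 2 * Y t ξ)
    (h_tilde : ℝ → EuclideanSpace ℝ (Fin n) → ℂ)
    (q : EuclideanSpace ℝ (Fin n) → ℝ)
    (hhq : ∀ t ≥ 0, ∀ ξ, ‖h_tilde t ξ‖ ≤ q ξ)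
    (u_tilde : ℝ → EuclideanSpace ℝ (Fin n) → ℂ)
    (hu : ∀ t, ∀ ξ, ξ ≠ 0 →
      u_tilde t ξ = -(1 / (‖ξ‖ ^ 2 : ℂ)) *
        ∫ s in (0:ℝ)..t, h_tilde s ξ * (Y' (t - s) ξ : ℂ)) :
    ∀ t > 0, ∀ ξ, ξ ≠ 0 →
      ‖u_tilde t ξ‖ ≤ q ξ * ∫ s in (0:ℝ)..t, 1 / (s * k s) := by
  intro t ht ξ hξ
  have hq0 : 0 ≤ q ξ := (norm_nonneg _).trans (hhq 0 le_rfl ξ)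
  have hn2 : (0:ℝ) < ‖ξ‖ ^ 2 := pow_pos (norm_pos_iff.mpr hξ) 2
  -- integrability
  have hI : IntervalIntegrable (fun s => 1 / (s * k s)) volume 0 t :=
    (intervalIntegrable_iff_integrableOn_Ioc_of_le ht.le).mpr (hkint t ht)
  have hI2 : IntervalIntegrable (fun s => 1 / ((t - s) * k (t - s))) volume 0 t := by
    have := (hI.comp_sub_left t).symm
    simpa using this
  set g : ℝ → ℝ := fun s => q ξ * ‖ξ‖ ^ 2 * (1 / ((t - s) * k (t - s))) with hg
  have hIg : IntervalIntegrable g volume 0 t := hI2.const_mul _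
  -- a.e. pointwise bound
  have hbound : ∀ᵐ s ∂(volume.restrict (Set.uIoc 0 t)),
      ‖h_tilde s ξ * (Y' (t - s) ξ : ℂ)‖ ≤ g s := by
    rw [uIoc_of_le ht.le]
    have hne : ∀ᵐ s : ℝ, s ≠ t := by
      rw [MeasureTheory.ae_iff]
      simpa [not_not, setOf_eq_eq_singleton] using Real.volume_singleton
    filter_upwards [ae_restrict_mem measurableSet_Ioc, ae_restrict_of_ae hne]
      with s hs hst
    have hτ : 0 < t - s := sub_pos.mpr (lt_of_le_of_ne hs.2 hst)
    have hkτ : 0 < (t - s) * k (t - s) := mul_pos hτ (hkpos _ hτ)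
    have hY'le : Y' (t - s) ξ ≤ 0 :=
      deriv_nonpos_of_antitoneOn_Ioi hτ (hYder ξ _ hτ) (hYanti ξ)
    have hineq : -((t - s) * k (t - s)) * Y' (t - s) ξ ≤ ‖ξ‖ ^ 2 * 1 := by
      refine (hYineq ξ _ hτ).trans ?_
      exact mul_le_mul_of_nonneg_left (hYbd ξ _ hτ).2 (le_of_lt hn2)
    have hY'bd : -Y' (t - s) ξ ≤ ‖ξ‖ ^ 2 * (1 / ((t - s) * k (t - s))) := by
      rw [mul_one_div, le_div_iff₀ hkτ]
      calc -Y' (t - s) ξ * ((t - s) * k (t - s))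
          = -((t - s) * k (t - s)) * Y' (t - s) ξ := by ring
        _ ≤ ‖ξ‖ ^ 2 * 1 := hineq
        _ = ‖ξ‖ ^ 2 := mul_one _
    have habs : ‖(Y' (t - s) ξ : ℂ)‖ = -Y' (t - s) ξ := by
      rw [Complex.norm_real, Real.norm_eq_abs, abs_of_nonpos hY'le]
    rw [norm_mul, habs]
    show ‖h_tilde s ξ‖ * -Y' (t - s) ξ ≤ q ξ * ‖ξ‖ ^ 2 * (1 / ((t - s) * k (t - s)))
    rw [mul_assoc]
    exact mul_le_mul (hhq s hs.1.le ξ) hY'bd (neg_nonneg.mpr hY'le) hq0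
  have key : ‖∫ s in (0:ℝ)..t, h_tilde s ξ * (Y' (t - s) ξ : ℂ)‖ ≤
      |∫ s in (0:ℝ)..t, g s| :=
    intervalIntegral.norm_integral_le_abs_of_norm_le hbound hIg
  -- compute the integral of g
  have hint_nonneg : 0 ≤ ∫ s in (0:ℝ)..t, 1 / (s * k s) := by
    refine intervalIntegral.integral_nonneg ht.le fun u hu => ?_
    rcases eq_or_lt_of_le hu.1 with h0 | h0
    · simp [← h0]
    · have := hkpos u h0
      positivity
  have hgint : ∫ s in (0:ℝ)..t, g s =
      q ξ * ‖ξ‖ ^ 2 * ∫ s in (0:ℝ)..t, 1 / (s * k s) := by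
    rw [hg, intervalIntegral.integral_const_mul]
    congr 1
    have := intervalIntegral.integral_comp_sub_left
      (fun s => 1 / (s * k s)) t (a := 0) (b := t)
    simpa using this
  have habs_g : |∫ s in (0:ℝ)..t, g s| =
      q ξ * ‖ξ‖ ^ 2 * ∫ s in (0:ℝ)..t, 1 / (s * k s) := by
    rw [hgint, abs_of_nonneg]
    positivity
  rw [hu t ξ hξ, norm_mul]
  have hcoef : ‖-(1 / (‖ξ‖ ^ 2 : ℂ))‖ = 1 / ‖ξ‖ ^ 2 := by
    rw [norm_neg, norm_div, norm_one, norm_pow, Complex.norm_real, norm_norm]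
  rw [hcoef]
  calc 1 / ‖ξ‖ ^ 2 * ‖∫ s in (0:ℝ)..t, h_tilde s ξ * (Y' (t - s) ξ : ℂ)‖
      ≤ 1 / ‖ξ‖ ^ 2 * (q ξ * ‖ξ‖ ^ 2 * ∫ s in (0:ℝ)..t, 1 / (s * k s)) := by
        refine mul_le_mul_of_nonneg_left ?_ (by positivity)
        exact key.trans (le_of_eq habs_g)
    _ = q ξ * ∫ s in (0:ℝ)..t, 1 / (s * k s) := by
        have hne : ‖ξ‖ ≠ 0 := ne_of_gt (norm_pos_iff.mpr hξ)
        field_simp
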